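/- arXiv:hep-th/0111188 — 3 statements merged into one kernel-verified Lean document; each statement's English description precedes it below -/
import Mathlib

section
/- Let A, B be von Neumann algebras on a Hilbert space H with a unit vector Ω, and let U(a) be a one-parameter unitary group with positive generator such that U(a)Ω = Ω, U(a)AU(a)* = A for all a, and the commutator [U(a)XU(a)*, Y] = 0 for all X ∈ A, Y ∈ B, and a ∈ ℝ. Then for X ∈ A, Y ∈ B, the function a ↦ ⟨Ω, U(a)XU(a)* Y Ω⟩ is constant in a. -/
open scoped InnerProductSpace

/-- `F : ℝ → ℂ` extends to a bounded continuous function on the closed half-plane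
`{z | 0 ≤ σ * z.im}`, holomorphic in its interior, restricting to `F` on `ℝ`. -/
def ExtendsToHalfPlane (σ : ℝ) (F : ℝ → ℂ) : Prop :=
  ∃ G : ℂ → ℂ, ContinuousOn G {z : ℂ | 0 ≤ σ * z.im} ∧
    DifferentiableOn ℂ G {z : ℂ | 0 < σ * z.im} ∧
    (∃ C : ℝ, ∀ z ∈ {z : ℂ | 0 ≤ σ * z.im}, ‖G z‖ ≤ C) ∧
    ∀ x : ℝ, G (x : ℂ) = F x

/-- Spectral characterization of positivity of the self-adjoint generator of a
one-parameter unitary group. -/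
def HasPositiveGenerator {H : Type*} [NormedAddCommGroup H] [InnerProductSpace ℂ H]
    (U : ℝ → H →L[ℂ] H) : Prop :=
  ∀ ξ η : H, ExtendsToHalfPlane 1 (fun a => ⟪ξ, U a η⟫_ℂ)


open Complex Set intervalIntegral


section Morera

private lemma rect_half {f : ℂ → ℂ} (hc : Continuous f)
    (hd : DifferentiableOn ℂ f {z : ℂ | z.im ≠ 0})
    (x₁ x₂ y₁ y₂ : ℝ) (hy : (0 ≤ y₁ ∧ 0 ≤ y₂) ∨ (y₁ ≤ 0 ∧ y₂ ≤ 0)) :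
    (∫ t : ℝ in x₁..x₂, f (t + y₁ * I)) - (∫ t : ℝ in x₁..x₂, f (t + y₂ * I)) +
      I • (∫ s : ℝ in y₁..y₂, f (x₂ + s * I)) -
      I • (∫ s : ℝ in y₁..y₂, f (x₁ + s * I)) = 0 := by
  have h := integral_boundary_rect_eq_zero_of_continuousOn_of_differentiableOn f
    (x₁ + y₁ * I) (x₂ + y₂ * I) (hc.continuousOn) ?_
  · simpa using h
  · refine hd.mono ?_
    rintro z ⟨-, hz2⟩
    have hz2' : z.im ∈ Ioo (min y₁ y₂) (max y₁ y₂) := by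
      simpa using hz2
    show z.im ≠ 0
    rcases hy with ⟨h1, h2⟩ | ⟨h1, h2⟩
    · have : 0 ≤ min y₁ y₂ := le_min h1 h2
      exact ne_of_gt (lt_of_le_of_lt this hz2'.1)
    · have : max y₁ y₂ ≤ 0 := max_le h1 h2
      exact ne_of_lt (lt_of_lt_of_le hz2'.2 this)

private lemma rect_zero {f : ℂ → ℂ} (hc : Continuous f)
    (hd : DifferentiableOn ℂ f {z : ℂ | z.im ≠ 0})
    (x₁ x₂ y₁ y₂ : ℝ) :
    (∫ t : ℝ in x₁..x₂, f (t + y₁ * I)) - (∫ t : ℝ in x₁..x₂, f (t + y₂ * I)) +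
      I • (∫ s : ℝ in y₁..y₂, f (x₂ + s * I)) -
      I • (∫ s : ℝ in y₁..y₂, f (x₁ + s * I)) = 0 := by
  have hy1 : (0 ≤ y₁ ∧ (0:ℝ) ≤ 0) ∨ (y₁ ≤ 0 ∧ (0:ℝ) ≤ 0) := by
    rcases le_total 0 y₁ with h | h
    · exact Or.inl ⟨h, le_refl 0⟩
    · exact Or.inr ⟨h, le_refl 0⟩
  have hy2 : ((0:ℝ) ≤ 0 ∧ 0 ≤ y₂) ∨ ((0:ℝ) ≤ 0 ∧ y₂ ≤ 0) := by
    rcases le_total 0 y₂ with h | h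
    · exact Or.inl ⟨le_refl 0, h⟩
    · exact Or.inr ⟨le_refl 0, h⟩
  have h1 := rect_half hc hd x₁ x₂ y₁ 0 (hy1.imp id (fun h => ⟨h.1, h.2⟩))
  have h2 := rect_half hc hd x₁ x₂ 0 y₂ (hy2.imp (fun h => ⟨h.1, h.2⟩) (fun h => ⟨h.1, h.2⟩))
  have i2 : ∀ x : ℝ, (∫ s : ℝ in y₁..0, f (x + s * I)) + (∫ s : ℝ in (0:ℝ)..y₂, f (x + s * I))
      = ∫ s : ℝ in y₁..y₂, f (x + s * I) := fun x =>
    integral_add_adjacent_intervals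
      ((hc.comp (by continuity)).intervalIntegrable _ _)
      ((hc.comp (by continuity)).intervalIntegrable _ _)
  rw [← i2 x₁, ← i2 x₂]
  simp only [smul_eq_mul, smul_add, mul_add] at h1 h2 ⊢
  linear_combination h1 + h2

end Morera

section M2
open Asymptotics Filter

private lemma morera_hasDerivAt {f : ℂ → ℂ} (hc : Continuous f)
    (hd : DifferentiableOn ℂ f {z : ℂ | z.im ≠ 0}) (z₀ : ℂ) :
    HasDerivAt (fun z : ℂ => (∫ t : ℝ in (0:ℝ)..z.re, f t) +
      I • ∫ s : ℝ in (0:ℝ)..z.im, f (z.re + s * I)) (f z₀) z₀ := by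
  have hcr : Continuous fun t : ℝ => f t := hc.comp continuous_ofReal
  have hcv : ∀ x : ℝ, Continuous fun s : ℝ => f (x + s * I) := fun x =>
    hc.comp (by continuity)
  have hch : ∀ y : ℝ, Continuous fun t : ℝ => f (t + y * I) := fun y =>
    hc.comp (by continuity)
  set F : ℂ → ℂ := fun z => (∫ t : ℝ in (0:ℝ)..z.re, f t) +
      I • ∫ s : ℝ in (0:ℝ)..z.im, f (z.re + s * I) with hF
  have key : ∀ w : ℂ, F w - F z₀ = (∫ t : ℝ in z₀.re..w.re, f (t + z₀.im * I)) +
      I • ∫ s : ℝ in z₀.im..w.im, f (w.re + s * I) := by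
    intro w
    have hrect := rect_zero hc hd z₀.re w.re 0 z₀.im
    have hsplit : (∫ t : ℝ in (0:ℝ)..z₀.re, f t) + (∫ t : ℝ in z₀.re..w.re, f t)
        = ∫ t : ℝ in (0:ℝ)..w.re, f t :=
      intervalIntegral.integral_add_adjacent_intervals
        (hcr.intervalIntegrable 0 z₀.re) (hcr.intervalIntegrable z₀.re w.re)
    have hsplit2 : (∫ s : ℝ in (0:ℝ)..z₀.im, f (w.re + s * I))
        + (∫ s : ℝ in z₀.im..w.im, f (w.re + s * I))
        = ∫ s : ℝ in (0:ℝ)..w.im, f (w.re + s * I) :=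
      intervalIntegral.integral_add_adjacent_intervals
        ((hcv w.re).intervalIntegrable 0 z₀.im) ((hcv w.re).intervalIntegrable z₀.im w.im)
    have hzero : ∀ t : ℝ, f (t + ((0:ℝ) : ℂ) * I) = f t := by intro t; norm_num
    simp only [hzero] at hrect
    simp only [hF, smul_eq_mul] at hrect ⊢
    linear_combination hrect - hsplit - I * hsplit2
  rw [hasDerivAt_iff_isLittleO, isLittleO_iff]
  intro c hc0
  obtain ⟨δ, hδ0, hδ⟩ := Metric.continuousAt_iff.1 (hc.continuousAt (x := z₀)) (c/3)
    (by positivity)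
  rw [Metric.eventually_nhds_iff]
  refine ⟨δ/2, by positivity, fun w hw => ?_⟩
  have hre : |w.re - z₀.re| ≤ ‖w - z₀‖ := by
    simpa using Complex.abs_re_le_norm (w - z₀)
  have him : |w.im - z₀.im| ≤ ‖w - z₀‖ := by
    simpa using Complex.abs_im_le_norm (w - z₀)
  have hwz : ‖w - z₀‖ < δ/2 := by simpa [dist_eq_norm] using hw
  have hwrep : F w - F z₀ - (w - z₀) • f z₀
      = (∫ t : ℝ in z₀.re..w.re, (f (t + z₀.im * I) - f z₀)) +
        I • ∫ s : ℝ in z₀.im..w.im, (f (w.re + s * I) - f z₀) := by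
    rw [key w, intervalIntegral.integral_sub
        ((hch z₀.im).intervalIntegrable _ _) intervalIntegrable_const,
      intervalIntegral.integral_sub
        ((hcv w.re).intervalIntegrable _ _) intervalIntegrable_const]
    simp only [intervalIntegral.integral_const, smul_eq_mul, Complex.real_smul]
    have hw' : w - z₀ = ((w.re - z₀.re : ℝ) : ℂ) + ((w.im - z₀.im : ℝ) : ℂ) * I := by
      simp [Complex.ext_iff]
    rw [hw']
    push_cast
    ring
  have est1 : ‖∫ t : ℝ in z₀.re..w.re, (f (t + z₀.im * I) - f z₀)‖
      ≤ (c/3) * |w.re - z₀.re| := by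
    apply intervalIntegral.norm_integral_le_of_norm_le_const
    intro t ht
    have h0 : ((t:ℂ) + z₀.im * I) - z₀ = ((t - z₀.re : ℝ) : ℂ) := by
      simp [Complex.ext_iff]
    have h1 : dist ((t:ℂ) + z₀.im * I) z₀ = |t - z₀.re| := by
      rw [dist_eq_norm, h0, Complex.norm_real, Real.norm_eq_abs]
    have h2 : |t - z₀.re| ≤ |w.re - z₀.re| :=
      abs_sub_left_of_mem_uIcc (Set.uIoc_subset_uIcc ht)
    have : dist ((t:ℂ) + z₀.im * I) z₀ < δ := by
      rw [h1]; calc |t - z₀.re| ≤ |w.re - z₀.re| := h2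
        _ ≤ ‖w - z₀‖ := hre
        _ < δ := by linarith
    have := hδ this
    rw [dist_eq_norm] at this
    exact this.le
  have est2 : ‖∫ s : ℝ in z₀.im..w.im, (f (w.re + s * I) - f z₀)‖
      ≤ (c/3) * |w.im - z₀.im| := by
    apply intervalIntegral.norm_integral_le_of_norm_le_const
    intro s hs
    have h0 : ((w.re:ℂ) + s * I) - z₀ = ((w.re - z₀.re : ℝ) : ℂ) + ((s - z₀.im : ℝ) : ℂ) * I := by
      simp [Complex.ext_iff]
    have h1 : dist ((w.re:ℂ) + s * I) z₀ ≤ |w.re - z₀.re| + |s - z₀.im| := by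
      rw [dist_eq_norm, h0]
      refine (norm_add_le _ _).trans ?_
      simp [← Complex.ofReal_sub, Complex.norm_real, Real.norm_eq_abs]
    have h2 : |s - z₀.im| ≤ |w.im - z₀.im| :=
      abs_sub_left_of_mem_uIcc (Set.uIoc_subset_uIcc hs)
    have : dist ((w.re:ℂ) + s * I) z₀ < δ := by
      calc dist ((w.re:ℂ) + s * I) z₀ ≤ |w.re - z₀.re| + |s - z₀.im| := h1
        _ ≤ ‖w - z₀‖ + ‖w - z₀‖ := add_le_add hre (h2.trans him)
        _ < δ := by linarith
    have := hδ this
    rw [dist_eq_norm] at this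
    exact this.le
  calc ‖F w - F z₀ - (w - z₀) • f z₀‖
      ≤ ‖∫ t : ℝ in z₀.re..w.re, (f (t + z₀.im * I) - f z₀)‖ +
        ‖I • ∫ s : ℝ in z₀.im..w.im, (f (w.re + s * I) - f z₀)‖ := by
        rw [hwrep]; exact norm_add_le _ _
    _ ≤ (c/3) * |w.re - z₀.re| + (c/3) * |w.im - z₀.im| := by
        rw [norm_smul, Complex.norm_I, one_mul]; exact add_le_add est1 est2
    _ ≤ (c/3) * ‖w - z₀‖ + (c/3) * ‖w - z₀‖ := by
        gcongr
    _ ≤ c * ‖w - z₀‖ := by nlinarith [norm_nonneg (w - z₀)]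

/-- **Morera-type gluing**: a continuous function holomorphic off the real axis is entire. -/
lemma differentiable_of_continuous_off_real {f : ℂ → ℂ} (hc : Continuous f)
    (hd : DifferentiableOn ℂ f {z : ℂ | z.im ≠ 0}) : Differentiable ℂ f := by
  set F : ℂ → ℂ := fun z : ℂ => (∫ t : ℝ in (0:ℝ)..z.re, f t) +
      I • ∫ s : ℝ in (0:ℝ)..z.im, f (z.re + s * I) with hF
  have hFd : Differentiable ℂ F := fun z => (morera_hasDerivAt hc hd z).differentiableAt
  have hderiv : deriv F = f := funext fun z => (morera_hasDerivAt hc hd z).deriv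
  have : AnalyticOnNhd ℂ F Set.univ := fun z _ => hFd.analyticAt z
  have := this.deriv
  rw [hderiv] at this
  exact fun z => (this z (Set.mem_univ z)).differentiableAt

end M2


/-- A function on `ℝ` extending to a bounded holomorphic function on each closed half-plane
is constant. -/
lemma const_of_up_down_extension {F : ℝ → ℂ} (h₁ : ExtendsToHalfPlane 1 F)
    (G₂ : ℂ → ℂ) (h₂c : ContinuousOn G₂ {z : ℂ | z.im ≤ 0})
    (h₂d : DifferentiableOn ℂ G₂ {z : ℂ | z.im < 0})
    (h₂b : ∃ C : ℝ, ∀ z ∈ {z : ℂ | z.im ≤ 0}, ‖G₂ z‖ ≤ C)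
    (h₂r : ∀ x : ℝ, G₂ (x : ℂ) = F x) (a b : ℝ) : F a = F b := by
  obtain ⟨G₁, c₁, d₁, ⟨C₁, b₁⟩, r₁⟩ := h₁
  simp only [one_mul] at c₁ d₁ b₁
  obtain ⟨C₂, b₂⟩ := h₂b
  set Gl : ℂ → ℂ := fun z => if 0 ≤ z.im then G₁ z else G₂ z with hGl
  have hfrontier : ∀ z ∈ frontier {z : ℂ | 0 ≤ z.im}, G₁ z = G₂ z := by
    intro z hz
    rw [Complex.frontier_setOf_le_im] at hz
    have hz' : z.im = 0 := hz
    have hz0 : z = (z.re : ℂ) := by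
      apply Complex.ext <;> simp [hz']
    rw [hz0, r₁, h₂r]
  have hclosed : IsClosed {z : ℂ | 0 ≤ z.im} :=
    isClosed_le continuous_const Complex.continuous_im
  have hcont : Continuous Gl := by
    apply continuous_if hfrontier
    · rw [hclosed.closure_eq]; exact c₁
    · have hset : {z : ℂ | ¬ 0 ≤ z.im} = {z : ℂ | z.im < 0} := by
        ext z; simp [not_le]
      rw [hset, Complex.closure_setOf_im_lt]
      exact h₂c
  have hdiff : Differentiable ℂ Gl := by
    apply differentiable_of_continuous_off_real hcont
    intro z hz
    rcases lt_or_gt_of_ne (hz : z.im ≠ 0) with hneg | hpos'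
    · have hopen : IsOpen {z : ℂ | z.im < 0} :=
        isOpen_lt Complex.continuous_im continuous_const
      have hG₂ : DifferentiableAt ℂ G₂ z := h₂d.differentiableAt (hopen.mem_nhds hneg)
      have hEq : Gl =ᶠ[nhds z] G₂ := by
        filter_upwards [hopen.mem_nhds hneg] with w hw
        exact if_neg (not_le.2 hw)
      exact (hG₂.congr_of_eventuallyEq hEq).differentiableWithinAt
    · have hopen : IsOpen {z : ℂ | 0 < z.im} :=
        isOpen_lt continuous_const Complex.continuous_im
      have hG₁ : DifferentiableAt ℂ G₁ z := d₁.differentiableAt (hopen.mem_nhds hpos')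
      have hEq : Gl =ᶠ[nhds z] G₁ := by
        filter_upwards [hopen.mem_nhds hpos'] with w hw
        exact if_pos hw.le
      exact (hG₁.congr_of_eventuallyEq hEq).differentiableWithinAt
  have hbdd : Bornology.IsBounded (Set.range Gl) := by
    rw [isBounded_iff_forall_norm_le]
    refine ⟨max C₁ C₂, ?_⟩
    rintro x ⟨z, rfl⟩
    by_cases hzim : 0 ≤ z.im
    · simp only [hGl, if_pos hzim]
      exact (b₁ z hzim).trans (le_max_left _ _)
    · simp only [hGl, if_neg hzim]
      exact (b₂ z (not_le.1 hzim).le).trans (le_max_right _ _)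
  have hval : ∀ x : ℝ, Gl (x : ℂ) = F x := by
    intro x
    simp only [hGl, Complex.ofReal_im, if_pos le_rfl]
    exact r₁ x
  rw [← hval a, ← hval b]
  exact hdiff.apply_eq_apply_of_bounded hbdd _ _


/-- Let `A`, `B` be von Neumann algebras on `H` with a unit vector `Ω`,
and `U` a one-parameter unitary group with positive generator such that `U a Ω = Ω`,
`U a A U a⁻¹ = A`, and translated elements of `A` commute with `B`.  Then for `X ∈ A`,
`Y ∈ B` the function `a ↦ ⟪Ω, U a X U (-a) Y Ω⟫` is constant in `a`. -/
theorem stmt1 {H : Type*} [NormedAddCommGroup H] [InnerProductSpace ℂ H] [CompleteSpace H]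
    (A B : VonNeumannAlgebra H) (Ω : H) (hΩ : ‖Ω‖ = 1)
    (U : ℝ → H →L[ℂ] H)
    (hgroup : ∀ a b : ℝ, U a * U b = U (a + b)) (hone : U 0 = 1)
    (hunitary : ∀ (a : ℝ) (ξ η : H), ⟪U a ξ, U a η⟫_ℂ = ⟪ξ, η⟫_ℂ)
    (hsurj : ∀ a : ℝ, Function.Surjective (U a))
    (hstrongcont : ∀ ξ : H, Continuous fun a : ℝ => U a ξ)
    (hpos : HasPositiveGenerator U)
    (hΩinv : ∀ a : ℝ, U a Ω = Ω)
    (hAinv : ∀ a : ℝ, ∀ X ∈ A, U a * X * U (-a) ∈ A)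
    (hcomm : ∀ a : ℝ, ∀ X ∈ A, ∀ Y ∈ B, Commute (U a * X * U (-a)) Y) :
    ∀ X ∈ A, ∀ Y ∈ B, ∀ a b : ℝ,
      ⟪Ω, ((U a * X * U (-a)) * Y) Ω⟫_ℂ = ⟪Ω, ((U b * X * U (-b)) * Y) Ω⟫_ℂ := by
  intro X hX Y hY a b
  set F : ℝ → ℂ := fun a => ⟪Ω, ((U a * X * U (-a)) * Y) Ω⟫_ℂ with hFdef
  -- first representation: F a = ⟪Y† Ω, U a (X Ω)⟫
  have rep1 : ∀ c : ℝ, F c = ⟪ContinuousLinearMap.adjoint (Y : H →L[ℂ] H) Ω, U c (X Ω)⟫_ℂ := by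
    intro c
    have hc := (hcomm c X hX Y hY).eq
    have : ((U c * ↑X * U (-c)) * ↑Y) Ω = Y (U c (X Ω)) := by
      rw [hc]
      simp only [ContinuousLinearMap.mul_apply]
      rw [hΩinv (-c)]
    rw [hFdef]
    simp only []
    rw [this, ContinuousLinearMap.adjoint_inner_left]
  -- second representation: F a = ⟪X† Ω, U (-a) (Y Ω)⟫
  have rep2 : ∀ c : ℝ, F c = ⟪ContinuousLinearMap.adjoint (X : H →L[ℂ] H) Ω, U (-c) (Y Ω)⟫_ℂ := by
    intro c
    have h1 : ((U c * ↑X * U (-c)) * ↑Y) Ω = U c (X (U (-c) (Y Ω))) := by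
      simp only [ContinuousLinearMap.mul_apply]
    have h2 : ⟪Ω, U c (X (U (-c) (Y Ω)))⟫_ℂ = ⟪Ω, X (U (-c) (Y Ω))⟫_ℂ := by
      conv_rhs => rw [← hunitary c Ω (X ((U (-c)) (Y Ω))), hΩinv c]
    rw [hFdef]
    simp only []
    rw [h1, h2, ← ContinuousLinearMap.adjoint_inner_left]
  -- upper extension
  have h₁ : ExtendsToHalfPlane 1 F := by
    have := hpos (ContinuousLinearMap.adjoint (Y : H →L[ℂ] H) Ω) (X Ω)
    have heq : (fun c : ℝ => ⟪ContinuousLinearMap.adjoint (Y : H →L[ℂ] H) Ω, U c (X Ω)⟫_ℂ)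
        = F := funext fun c => (rep1 c).symm
    rwa [heq] at this
  -- lower extension
  obtain ⟨G, Gc, Gd, ⟨C, Gb⟩, Gr⟩ :=
    hpos (ContinuousLinearMap.adjoint (X : H →L[ℂ] H) Ω) (Y Ω)
  simp only [one_mul] at Gc Gd Gb
  refine const_of_up_down_extension h₁ (fun z => G (-z)) ?_ ?_ ⟨C, ?_⟩ ?_ a b
  · refine Gc.comp continuous_neg.continuousOn ?_
    intro z hz
    simp only [Set.mem_setOf_eq] at hz ⊢
    simpa using hz
  · refine Gd.comp differentiable_neg.differentiableOn ?_
    intro z hz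
    simp only [Set.mem_setOf_eq] at hz ⊢
    simpa using hz
  · intro z hz
    refine Gb (-z) ?_
    simp only [Set.mem_setOf_eq] at hz ⊢
    simpa using hz
  · intro x
    show G (-(x : ℂ)) = F x
    have hx : ((-(x : ℂ))) = ((-x : ℝ) : ℂ) := by push_cast; ring
    rw [hx, Gr (-x)]
    exact (rep2 x).symm
end

section
/- Let A, B be commuting von Neumann algebras acting on H with cyclic unit vector Ω, and suppose there is a one-parameter unitary group U(a) with positive generator fixing Ω, normalizing A, commuting with B elementwise in the adjoint sense, and satisfying the cluster property: ⟨Ω, U(a)XU(a)* Y Ω⟩ → ⟨Ω, X Ω⟩⟨Ω, Y Ω⟩ as a → ∞ for X ∈ A, Y ∈ B. Then the vacuum factorizes: ⟨Ω, X Y Ω⟩ = ⟨Ω, X Ω⟩⟨Ω, Y Ω⟩ for all X ∈ A, Y ∈ B. -/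
open scoped InnerProductSpace
open Filter

section EdgeOfWedgeHelpers

open Complex Set intervalIntegral Bornology

open Complex Set intervalIntegral Bornology

/-- Rectangle boundary integral abbreviation. -/
private noncomputable def rectJ (G : ℂ → ℂ) (a b c d : ℝ) : ℂ :=
  (∫ x : ℝ in a..b, G (x + c * I)) - (∫ x : ℝ in a..b, G (x + d * I)) +
    I • (∫ y : ℝ in c..d, G (b + y * I)) - I • (∫ y : ℝ in c..d, G (a + y * I))

private lemma abs_sub_le_of_mem_uIoc {a b x : ℝ} (hx : x ∈ Set.uIoc a b) : |x - a| ≤ |b - a| := by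
  rw [Set.uIoc, Set.mem_Ioc] at hx
  have habs : |b - a| = max a b - min a b := by
    rcases le_total a b with h | h
    · rw [_root_.abs_of_nonneg (by linarith), max_eq_right h, min_eq_left h]
    · rw [_root_.abs_of_nonpos (by linarith), max_eq_left h, min_eq_right h]; ring
  rw [habs, abs_sub_le_iff]
  constructor <;>
    [skip; skip] <;>
    linarith [hx.1.le, hx.2, min_le_left a b, min_le_right a b, le_max_left a b, le_max_right a b]

lemma edge_liouville {G₁ G₂ : ℂ → ℂ} {C₁ C₂ : ℝ}
    (h₁c : ContinuousOn G₁ {z : ℂ | 0 ≤ z.im})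
    (h₁d : DifferentiableOn ℂ G₁ {z : ℂ | 0 < z.im})
    (h₁b : ∀ z : ℂ, 0 ≤ z.im → ‖G₁ z‖ ≤ C₁)
    (h₂c : ContinuousOn G₂ {z : ℂ | z.im ≤ 0})
    (h₂d : DifferentiableOn ℂ G₂ {z : ℂ | z.im < 0})
    (h₂b : ∀ z : ℂ, z.im ≤ 0 → ‖G₂ z‖ ≤ C₂)
    (heq : ∀ x : ℝ, G₁ x = G₂ x) :
    ∀ x y : ℝ, G₁ x = G₁ y := by
  classical
  set G : ℂ → ℂ := fun z => if 0 ≤ z.im then G₁ z else G₂ z with hGdef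
  have him0 : ∀ z : ℂ, z.im = 0 → G₁ z = G₂ z := by
    intro z hz
    have hzre : z = (z.re : ℂ) := Complex.ext (by simp) (by simp [hz])
    rw [hzre]; exact heq z.re
  have hGeq₁ : ∀ z : ℂ, 0 ≤ z.im → G z = G₁ z := fun z hz => if_pos hz
  have hGeq₂ : ∀ z : ℂ, z.im ≤ 0 → G z = G₂ z := by
    intro z hz
    by_cases h : 0 ≤ z.im
    · simp only [hGdef, if_pos h]; exact him0 z (le_antisymm hz h)
    · simp only [hGdef, if_neg h]
  -- continuity of the glued function
  have hGcont : Continuous G := by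
    apply continuous_if
    · intro a ha
      rw [show {x : ℂ | 0 ≤ x.im} = {z : ℂ | (0:ℝ) ≤ z.im} from rfl,
        Complex.frontier_setOf_le_im] at ha
      exact him0 a ha
    · rw [IsClosed.closure_eq (isClosed_le continuous_const Complex.continuous_im)]
      exact h₁c
    · have hcompl : ({x : ℂ | ¬ 0 ≤ x.im} : Set ℂ) = {z : ℂ | z.im < 0} := by
        ext z; simp [not_le]
      rw [show closure {x : ℂ | ¬ 0 ≤ x.im} = closure {z : ℂ | z.im < 0} from by rw [hcompl],
        Complex.closure_setOf_im_lt]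
      exact h₂c
  -- differentiability off the real axis
  have hGdiff : ∀ z : ℂ, z.im ≠ 0 → DifferentiableAt ℂ G z := by
    intro z hz
    rcases hz.lt_or_gt with h | h
    · have hopen : IsOpen {w : ℂ | w.im < 0} := isOpen_lt Complex.continuous_im continuous_const
      have hd : DifferentiableAt ℂ G₂ z := h₂d.differentiableAt (hopen.mem_nhds h)
      refine hd.congr_of_eventuallyEq ?_
      filter_upwards [hopen.mem_nhds h] with w hw using hGeq₂ w (le_of_lt hw)
    · have hopen : IsOpen {w : ℂ | 0 < w.im} := isOpen_lt continuous_const Complex.continuous_im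
      have hd : DifferentiableAt ℂ G₁ z := h₁d.differentiableAt (hopen.mem_nhds h)
      refine hd.congr_of_eventuallyEq ?_
      filter_upwards [hopen.mem_nhds h] with w hw using hGeq₁ w (le_of_lt hw)
  -- vanishing of rectangle boundary integrals for rectangles in a half-plane
  have key : ∀ a b c d : ℝ, (0 ≤ c ∧ 0 ≤ d) ∨ (c ≤ 0 ∧ d ≤ 0) → rectJ G a b c d = 0 := by
    intro a b c d hcd
    have h := Complex.integral_boundary_rect_eq_zero_of_continuousOn_of_differentiableOn G
      (a + c * I) (b + d * I) (hGcont.continuousOn) ?_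
    · simpa [rectJ] using h
    · intro w hw
      rw [Complex.mem_reProdIm] at hw
      have h2 := hw.2
      simp only [Complex.add_im, Complex.ofReal_im, Complex.mul_im, Complex.I_im, Complex.I_re,
        Complex.ofReal_re, zero_add, mul_one, mul_zero, add_zero, zero_mul] at h2
      refine (hGdiff w ?_).differentiableWithinAt
      rcases hcd with ⟨hc, hd⟩ | ⟨hc, hd⟩
      · have : 0 ≤ min c d := le_min hc hd
        exact ne_of_gt (lt_of_le_of_lt this h2.1)
      · have : max c d ≤ 0 := max_le hc hd
        exact ne_of_lt (lt_of_lt_of_le h2.2 this)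
  -- integrability helpers
  have hint : ∀ (r : ℝ) (c d : ℝ), IntervalIntegrable (fun y : ℝ => G (r + y * I)) MeasureTheory.volume c d :=
    fun r c d => (hGcont.comp
      (continuous_const.add ((Complex.continuous_ofReal).mul continuous_const))).intervalIntegrable c d
  have hinth : ∀ (c : ℝ) (a b : ℝ), IntervalIntegrable (fun x : ℝ => G (x + c * I)) MeasureTheory.volume a b :=
    fun c a b => (hGcont.comp
      ((Complex.continuous_ofReal).add continuous_const)).intervalIntegrable a b
  -- rectangle identity for all rectangles, by splitting at the real axis
  have hrect : ∀ a b c d : ℝ, rectJ G a b c d = 0 := by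
    intro a b c d
    have hsplit : rectJ G a b c d = rectJ G a b c 0 + rectJ G a b 0 d := by
      have hv1 : (∫ y : ℝ in c..(0:ℝ), G (b + y * I)) + (∫ y : ℝ in (0:ℝ)..d, G (b + y * I))
          = ∫ y : ℝ in c..d, G (b + y * I) :=
        integral_add_adjacent_intervals (hint b c 0) (hint b 0 d)
      have hv2 : (∫ y : ℝ in c..(0:ℝ), G (a + y * I)) + (∫ y : ℝ in (0:ℝ)..d, G (a + y * I))
          = ∫ y : ℝ in c..d, G (a + y * I) :=
        integral_add_adjacent_intervals (hint a c 0) (hint a 0 d)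
      simp only [rectJ, smul_eq_mul, ← hv1, ← hv2]
      ring
    have h1 : rectJ G a b c 0 = 0 := by
      rcases le_total 0 c with h | h
      · exact key a b c 0 (Or.inl ⟨h, le_refl 0⟩)
      · exact key a b c 0 (Or.inr ⟨h, le_refl 0⟩)
    have h2 : rectJ G a b 0 d = 0 := by
      rcases le_total 0 d with h | h
      · exact key a b 0 d (Or.inl ⟨le_refl 0, h⟩)
      · exact key a b 0 d (Or.inr ⟨le_refl 0, h⟩)
    rw [hsplit, h1, h2, add_zero]
  -- primitive of G
  set Hf : ℂ → ℂ := fun z => (∫ t : ℝ in (0:ℝ)..z.re, G (t + (0:ℝ) * I)) +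
      I • ∫ t : ℝ in (0:ℝ)..z.im, G (z.re + t * I) with hHdef
  have hHderiv : ∀ z : ℂ, HasDerivAt Hf (G z) z := by
    intro z
    -- difference formula
    have hdiffeq : ∀ w : ℂ, Hf w - Hf z =
        (∫ x : ℝ in z.re..w.re, G (x + z.im * I)) + I • ∫ t : ℝ in z.im..w.im, G (w.re + t * I) := by
      intro w
      have hh : (∫ t : ℝ in (0:ℝ)..z.re, G (t + (0:ℝ) * I)) + (∫ t : ℝ in z.re..w.re, G (t + (0:ℝ) * I))
          = ∫ t : ℝ in (0:ℝ)..w.re, G (t + (0:ℝ) * I) :=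
        integral_add_adjacent_intervals (hinth 0 0 z.re) (hinth 0 z.re w.re)
      have hv : (∫ t : ℝ in (0:ℝ)..z.im, G (w.re + t * I)) + (∫ t : ℝ in z.im..w.im, G (w.re + t * I))
          = ∫ t : ℝ in (0:ℝ)..w.im, G (w.re + t * I) :=
        integral_add_adjacent_intervals (hint w.re 0 z.im) (hint w.re z.im w.im)
      have hr := hrect z.re w.re 0 z.im
      simp only [rectJ, smul_eq_mul] at hr
      simp only [hHdef, smul_eq_mul, ← hh, ← hv]
      linear_combination hr
    rw [hasDerivAt_iff_isLittleO, Asymptotics.isLittleO_iff]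
    intro c hc
    have hGz := hGcont.continuousAt (x := z)
    rw [Metric.continuousAt_iff] at hGz
    obtain ⟨δ, hδ, hball⟩ := hGz (c / 2) (by linarith)
    rw [Metric.eventually_nhds_iff]
    refine ⟨δ / 2, by linarith, ?_⟩
    intro w hw
    rw [dist_eq_norm] at hw
    have hwz : ‖w - z‖ < δ / 2 := hw
    -- rewrite the difference
    rw [hdiffeq w]
    have hconst1 : (∫ _x : ℝ in z.re..w.re, G z) = ((w.re - z.re : ℝ) : ℂ) * G z := by
      rw [intervalIntegral.integral_const]; rw [Complex.real_smul]
    have hconst2 : (∫ _t : ℝ in z.im..w.im, G z) = ((w.im - z.im : ℝ) : ℂ) * G z := by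
      rw [intervalIntegral.integral_const]; rw [Complex.real_smul]
    have hwzdecomp : w - z = ((w.re - z.re : ℝ) : ℂ) + ((w.im - z.im : ℝ) : ℂ) * I := by
      apply Complex.ext <;> simp
    have hsplitint : (∫ x : ℝ in z.re..w.re, G (x + z.im * I)) + I • (∫ t : ℝ in z.im..w.im, G (w.re + t * I))
        - (w - z) • G z
        = (∫ x : ℝ in z.re..w.re, (G (x + z.im * I) - G z)) +
          I • ∫ t : ℝ in z.im..w.im, (G (w.re + t * I) - G z) := by
      rw [intervalIntegral.integral_sub (hinth z.im z.re w.re) intervalIntegrable_const,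
        intervalIntegral.integral_sub (hint w.re z.im w.im) intervalIntegrable_const,
        hconst1, hconst2]
      simp only [smul_eq_mul, hwzdecomp]
      ring
    rw [hsplitint]
    -- estimates
    have hb1 : ‖∫ x : ℝ in z.re..w.re, (G (x + z.im * I) - G z)‖ ≤ (c / 2) * |w.re - z.re| := by
      apply intervalIntegral.norm_integral_le_of_norm_le_const
      intro x hx
      have hxmem : |x - z.re| ≤ |w.re - z.re| := abs_sub_le_of_mem_uIoc hx
      have hdist : dist ((x : ℂ) + z.im * I) z < δ := by
        have : (x : ℂ) + z.im * I - z = ((x - z.re : ℝ) : ℂ) := by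
          apply Complex.ext <;> simp
        rw [dist_eq_norm, this, Complex.norm_real]
        calc |x - z.re| ≤ |w.re - z.re| := hxmem
          _ = |(w - z).re| := by simp
          _ ≤ ‖w - z‖ := Complex.abs_re_le_norm _
          _ < δ := by linarith
      have := hball hdist
      rw [dist_eq_norm] at this
      exact le_of_lt this
    have hb2 : ‖∫ t : ℝ in z.im..w.im, (G (w.re + t * I) - G z)‖ ≤ (c / 2) * |w.im - z.im| := by
      apply intervalIntegral.norm_integral_le_of_norm_le_const
      intro t ht
      have htmem : |t - z.im| ≤ |w.im - z.im| := abs_sub_le_of_mem_uIoc ht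
      have hdist : dist ((w.re : ℂ) + t * I) z < δ := by
        have heq' : (w.re : ℂ) + t * I - z = ((w.re - z.re : ℝ) : ℂ) + ((t - z.im : ℝ) : ℂ) * I := by
          apply Complex.ext <;> simp
        rw [dist_eq_norm, heq']
        calc ‖((w.re - z.re : ℝ) : ℂ) + ((t - z.im : ℝ) : ℂ) * I‖
            ≤ ‖((w.re - z.re : ℝ) : ℂ)‖ + ‖((t - z.im : ℝ) : ℂ) * I‖ := norm_add_le _ _
          _ = |w.re - z.re| + |t - z.im| := by
              rw [norm_mul, Complex.norm_I, mul_one, Complex.norm_real, Complex.norm_real,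
                Real.norm_eq_abs, Real.norm_eq_abs]
          _ ≤ ‖w - z‖ + |w.im - z.im| := by
              gcongr
              · calc |w.re - z.re| = |(w - z).re| := by simp
                  _ ≤ ‖w - z‖ := Complex.abs_re_le_norm _
          _ ≤ ‖w - z‖ + ‖w - z‖ := by
              gcongr
              calc |w.im - z.im| = |(w - z).im| := by simp
                _ ≤ ‖w - z‖ := Complex.abs_im_le_norm _
          _ < δ := by linarith
      have := hball hdist
      rw [dist_eq_norm] at this
      exact le_of_lt this
    calc ‖(∫ x : ℝ in z.re..w.re, (G (x + z.im * I) - G z)) +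
          I • ∫ t : ℝ in z.im..w.im, (G (w.re + t * I) - G z)‖
        ≤ ‖∫ x : ℝ in z.re..w.re, (G (x + z.im * I) - G z)‖ +
          ‖I • ∫ t : ℝ in z.im..w.im, (G (w.re + t * I) - G z)‖ := norm_add_le _ _
      _ = ‖∫ x : ℝ in z.re..w.re, (G (x + z.im * I) - G z)‖ +
          ‖∫ t : ℝ in z.im..w.im, (G (w.re + t * I) - G z)‖ := by
          rw [norm_smul, Complex.norm_I, one_mul]
      _ ≤ (c / 2) * |w.re - z.re| + (c / 2) * |w.im - z.im| := add_le_add hb1 hb2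
      _ ≤ (c / 2) * ‖w - z‖ + (c / 2) * ‖w - z‖ := by
          gcongr
          · calc |w.re - z.re| = |(w - z).re| := by simp
              _ ≤ ‖w - z‖ := Complex.abs_re_le_norm _
          · calc |w.im - z.im| = |(w - z).im| := by simp
              _ ≤ ‖w - z‖ := Complex.abs_im_le_norm _
      _ = c * ‖w - z‖ := by ring
  -- H is entire, hence G = deriv H is entire
  have hHdiff : Differentiable ℂ Hf := fun z => (hHderiv z).differentiableAt
  have hderivH : deriv Hf = G := funext fun z => (hHderiv z).deriv
  have hGdiffall : Differentiable ℂ G := by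
    rw [← hderivH]
    exact ((contDiff_infty_iff_deriv.1 hHdiff.contDiff).2).differentiable (by simp)
  -- G is bounded
  have hGbdd : IsBounded (Set.range G) := by
    rw [isBounded_iff_forall_norm_le]
    refine ⟨max C₁ C₂, ?_⟩
    rintro _ ⟨z, rfl⟩
    by_cases h : 0 ≤ z.im
    · rw [hGeq₁ z h]; exact le_trans (h₁b z h) (le_max_left _ _)
    · rw [hGeq₂ z (le_of_not_ge h)]
      exact le_trans (h₂b z (le_of_not_ge h)) (le_max_right _ _)
  -- Liouville
  intro x y
  have hxy : G x = G y := hGdiffall.apply_eq_apply_of_bounded hGbdd _ _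
  have hx : G (x : ℂ) = G₁ (x : ℂ) := hGeq₁ _ (by simp)
  have hy : G (y : ℂ) = G₁ (y : ℂ) := hGeq₁ _ (by simp)
  rw [← hx, ← hy, hxy]

end EdgeOfWedgeHelpers

/-- commuting von Neumann algebras `A`, `B` with cyclic unit vector `Ω`,
a one-parameter unitary group `U` with positive generator fixing `Ω`, normalizing `A`,
whose translates of `A` commute with `B`, and satisfying the cluster property.  Then
the vacuum factorizes: `⟪Ω, X Y Ω⟫ = ⟪Ω, X Ω⟫ ⟪Ω, Y Ω⟫` for `X ∈ A`, `Y ∈ B`. -/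
theorem stmt2 {H : Type*} [NormedAddCommGroup H] [InnerProductSpace ℂ H] [CompleteSpace H]
    (A B : VonNeumannAlgebra H) (Ω : H) (hΩ : ‖Ω‖ = 1)
    (hABcomm : ∀ X ∈ A, ∀ Y ∈ B, Commute X Y)
    (hcyclic : Dense (Submodule.span ℂ
      {ξ : H | ∃ X ∈ A, ∃ Y ∈ B, ξ = (X * Y) Ω} : Set H))
    (U : ℝ → H →L[ℂ] H)
    (hgroup : ∀ a b : ℝ, U a * U b = U (a + b)) (hone : U 0 = 1)
    (hunitary : ∀ (a : ℝ) (ξ η : H), ⟪U a ξ, U a η⟫_ℂ = ⟪ξ, η⟫_ℂ)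
    (hsurj : ∀ a : ℝ, Function.Surjective (U a))
    (hstrongcont : ∀ ξ : H, Continuous fun a : ℝ => U a ξ)
    (hpos : HasPositiveGenerator U)
    (hΩinv : ∀ a : ℝ, U a Ω = Ω)
    (hAinv : ∀ a : ℝ, ∀ X ∈ A, U a * X * U (-a) ∈ A)
    (hcomm : ∀ a : ℝ, ∀ X ∈ A, ∀ Y ∈ B, Commute (U a * X * U (-a)) Y)
    (hcluster : ∀ X ∈ A, ∀ Y ∈ B,
      Tendsto (fun a : ℝ => ⟪Ω, ((U a * X * U (-a)) * Y) Ω⟫_ℂ) atTop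
        (nhds (⟪Ω, X Ω⟫_ℂ * ⟪Ω, Y Ω⟫_ℂ))) :
    ∀ X ∈ A, ∀ Y ∈ B, ⟪Ω, (X * Y) Ω⟫_ℂ = ⟪Ω, X Ω⟫_ℂ * ⟪Ω, Y Ω⟫_ℂ := by
  intro X hX Y hY
  have hUU : ∀ (a : ℝ) (ξ : H), U (-a) (U a ξ) = ξ := by
    intro a ξ
    have h : U (-a) * U a = U 0 := by rw [hgroup, neg_add_cancel]
    calc U (-a) (U a ξ) = (U (-a) * U a) ξ := rfl
      _ = ξ := by rw [h, hone]; rfl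
  have hInner : ∀ (a : ℝ) (ξ η : H), ⟪ξ, U a η⟫_ℂ = ⟪U (-a) ξ, η⟫_ℂ := by
    intro a ξ η
    rw [← hunitary (-a) ξ (U a η), hUU]
  set F : ℝ → ℂ := fun a => ⟪Ω, ((U a * X * U (-a)) * Y) Ω⟫_ℂ with hFdef
  have hF1 : ∀ a : ℝ, F a = ⟪(ContinuousLinearMap.adjoint Y) Ω, U a (X Ω)⟫_ℂ := by
    intro a
    have hc := (hcomm a X hX Y hY).eq
    calc F a = ⟪Ω, ((U a * X * U (-a)) * Y) Ω⟫_ℂ := rfl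
      _ = ⟪Ω, (Y * (U a * X * U (-a))) Ω⟫_ℂ := by rw [hc]
      _ = ⟪Ω, Y ((U a) (X ((U (-a)) Ω)))⟫_ℂ := rfl
      _ = ⟪Ω, Y ((U a) (X Ω))⟫_ℂ := by rw [hΩinv]
      _ = ⟪(ContinuousLinearMap.adjoint Y) Ω, U a (X Ω)⟫_ℂ :=
        (ContinuousLinearMap.adjoint_inner_left Y _ _).symm
  have hF2 : ∀ a : ℝ, F a = ⟪(ContinuousLinearMap.adjoint X) Ω, U (-a) (Y Ω)⟫_ℂ := by
    intro a
    calc F a = ⟪Ω, (U a) (X ((U (-a)) (Y Ω)))⟫_ℂ := rfl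
      _ = ⟪U (-a) Ω, X ((U (-a)) (Y Ω))⟫_ℂ := by rw [hInner]
      _ = ⟪Ω, X ((U (-a)) (Y Ω))⟫_ℂ := by rw [hΩinv]
      _ = ⟪(ContinuousLinearMap.adjoint X) Ω, U (-a) (Y Ω)⟫_ℂ :=
        (ContinuousLinearMap.adjoint_inner_left X _ _).symm
  obtain ⟨G₁, hG₁c, hG₁d, ⟨C₁, hC₁⟩, hG₁x⟩ := hpos ((ContinuousLinearMap.adjoint Y) Ω) (X Ω)
  obtain ⟨G₂', hG₂c, hG₂d, ⟨C₂, hC₂⟩, hG₂x⟩ := hpos ((ContinuousLinearMap.adjoint X) Ω) (Y Ω)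
  simp only [one_mul] at hG₁c hG₁d hC₁ hG₂c hG₂d hC₂
  have h2c : ContinuousOn (fun z : ℂ => G₂' (-z)) {z : ℂ | z.im ≤ 0} :=
    hG₂c.comp continuous_neg.continuousOn
      (fun z hz => by
        simp only [Set.mem_setOf_eq, Complex.neg_im] at *
        linarith)
  have h2d : DifferentiableOn ℂ (fun z : ℂ => G₂' (-z)) {z : ℂ | z.im < 0} :=
    hG₂d.comp (differentiable_neg.differentiableOn)
      (fun z hz => by
        simp only [Set.mem_setOf_eq, Complex.neg_im] at *
        linarith)
  have h2b : ∀ z : ℂ, z.im ≤ 0 → ‖G₂' (-z)‖ ≤ C₂ := fun z hz =>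
    hC₂ (-z) (by simp only [Set.mem_setOf_eq, Complex.neg_im]; linarith)
  have h1b : ∀ z : ℂ, 0 ≤ z.im → ‖G₁ z‖ ≤ C₁ := fun z hz => hC₁ z hz
  have e1 : ∀ x : ℝ, G₁ (x : ℂ) = F x := by
    intro x
    rw [hF1 x]
    exact hG₁x x
  have heqR : ∀ x : ℝ, G₁ (x : ℂ) = (fun z : ℂ => G₂' (-z)) (x : ℂ) := by
    intro x
    have e2 : G₂' (-(x : ℂ)) = F x := by
      have hx : -(x : ℂ) = ((-x : ℝ) : ℂ) := by push_cast; ring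
      rw [hx, hF2 x]
      exact hG₂x (-x)
    simp only []
    rw [e1 x, e2]
  have hconst := edge_liouville hG₁c hG₁d h1b h2c h2d h2b heqR
  have hFconst : ∀ a : ℝ, F a = F 0 := by
    intro a
    rw [← e1 a, ← e1 0, hconst a 0]
  have hlim1 : Tendsto F atTop (nhds (F 0)) :=
    tendsto_const_nhds.congr (fun a => (hFconst a).symm)
  have hlim2 := hcluster X hX Y hY
  have hkey : F 0 = ⟪Ω, X Ω⟫_ℂ * ⟪Ω, Y Ω⟫_ℂ := tendsto_nhds_unique hlim1 hlim2
  rw [← hkey, hFdef]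
  simp only [neg_zero, hone, one_mul, mul_one]
end

section
/- Let f_δ : ℝ → ℝ be the indicator-like test function equal to 1 on [δ, 1] and 0 outside [0, 1+δ] (smoothly interpolating on intervals of length δ), and let the two-point function of the chiral U(1) current be ⟨j(x)j(y)⟩ = −1/(4π²(x − y − i0)²). Then ⟨j(f_δ), j(f_δ)⟩ = (1/4π²)∬ f_δ′(x) f_δ′(y) · (−log|x−y|) dx dy diverges logarithmically as δ → 0: ⟨j(f_δ), j(f_δ)⟩ = (1/2π²)(−log δ) + O(1). -/
open MeasureTheory Real

/-- The (distributional) derivative of the indicator-like test function `f_δ` which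
is `0` outside `[0, 1+δ]`, rises linearly from `0` to `1` on `[0, δ]`, equals `1` on
`[δ, 1]` and falls linearly back to `0` on `[1, 1+δ]`. -/
noncomputable def fder (δ : ℝ) (x : ℝ) : ℝ :=
  if x ∈ Set.Ico (0 : ℝ) δ then 1 / δ
  else if x ∈ Set.Icc (1 : ℝ) (1 + δ) then -(1 / δ) else 0

/-- The current two-point form `⟨j(f_δ), j(f_δ)⟩` for the chiral `U(1)` current with
`⟨j(x)j(y)⟩ = −1/(4π²(x − y − i0)²)`, rewritten after integration by parts as
`(1/4π²) ∬ f_δ′(x) f_δ′(y) (−log|x − y|) dx dy`. -/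
noncomputable def currentNorm (δ : ℝ) : ℝ :=
  (1 / (4 * π ^ 2)) *
    ∫ x : ℝ, ∫ y : ℝ, fder δ x * fder δ y * (-Real.log |x - y|)


open Set intervalIntegral

noncomputable def Phi (t : ℝ) : ℝ := t * Real.log t - t

lemma myIntegrableLog (a b : ℝ) : IntervalIntegrable Real.log volume a b := by
  suffices h : ∀ c : ℝ, 0 ≤ c → IntervalIntegrable Real.log volume 0 c by
    have key : ∀ c : ℝ, IntervalIntegrable Real.log volume 0 c := by
      intro c
      rcases le_total 0 c with hc | hc
      · exact h c hc
      · rw [IntervalIntegrable.iff_comp_neg, neg_zero]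
        have := h (-c) (by linarith)
        apply this.congr
        intro x _
        simp [Real.log_neg_eq_log]
    exact (key a).symm.trans (key b)
  intro c hc
  have hbound : ∀ x ∈ Ioc (0:ℝ) c, ‖Real.log x‖ ≤ x + 2 * x ^ (-(1:ℝ)/2) := by
    intro x hx
    have hx0 : 0 < x := hx.1
    have hrp : (0:ℝ) < x ^ (-(1:ℝ)/2) := Real.rpow_pos_of_pos hx0 _
    rcases le_total 1 x with h1 | h1
    · rw [Real.norm_eq_abs, abs_of_nonneg (Real.log_nonneg h1)]
      have := Real.log_le_sub_one_of_pos hx0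
      nlinarith
    · rw [Real.norm_eq_abs, abs_of_nonpos (Real.log_nonpos hx0.le h1)]
      have h2 : Real.log (x ^ (-(1:ℝ)/2)) ≤ x ^ (-(1:ℝ)/2) - 1 :=
        Real.log_le_sub_one_of_pos hrp
      rw [Real.log_rpow hx0] at h2
      nlinarith
  have hg : IntervalIntegrable (fun x : ℝ => x + 2 * x ^ (-(1:ℝ)/2)) volume 0 c := by
    apply (intervalIntegrable_id (μ := volume)).add
    exact (intervalIntegral.intervalIntegrable_rpow' (by norm_num)).const_mul 2
  rw [intervalIntegrable_iff, uIoc_of_le hc] at hg ⊢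
  apply Integrable.mono' hg (Real.measurable_log.aestronglyMeasurable.restrict)
  filter_upwards [ae_restrict_mem measurableSet_Ioc] with x hx
  exact hbound x hx



noncomputable def Psi (t : ℝ) : ℝ := t ^ 2 / 2 * Real.log t - 3 / 4 * t ^ 2

lemma Phi_continuous : Continuous Phi :=
  Real.continuous_mul_log.sub continuous_id

lemma myIntegralLog0 {c : ℝ} (hc : 0 ≤ c) : ∫ t in (0:ℝ)..c, Real.log t = Phi c := by
  have h := intervalIntegral.integral_eq_sub_of_hasDeriv_right_of_le hc
    (f := Phi) (f' := Real.log)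
    (Phi_continuous.continuousOn)
    (fun x hx => by
      have : HasDerivAt Phi (Real.log x) x := by
        have h1 := Real.hasDerivAt_mul_log (x := x) (ne_of_gt hx.1)
        show HasDerivAt (fun t => t * Real.log t - t) _ x
        exact (h1.sub (hasDerivAt_id' x)).congr_deriv (by ring)
      exact this.hasDerivWithinAt)
    (myIntegrableLog 0 c)
  rw [h]
  simp [Phi]

lemma myIntegralLog (c : ℝ) : ∫ t in (0:ℝ)..c, Real.log t = Phi c := by
  rcases le_total 0 c with hc | hc
  · exact myIntegralLog0 hc
  · have h1 : ∫ t in (0:ℝ)..(-c), Real.log t = Phi (-c) := myIntegralLog0 (by linarith)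
    have h2 : ∫ t in (0:ℝ)..(-c), Real.log t = ∫ t in (0:ℝ)..(-c), Real.log (-t) := by
      apply intervalIntegral.integral_congr
      intro x _
      simp [Real.log_neg_eq_log]
    rw [h2, intervalIntegral.integral_comp_neg (fun t => Real.log t)] at h1
    have h3 : ∫ t in (c:ℝ)..0, Real.log t = Phi (-c) := by
      simpa using h1
    have h4 : ∫ t in (0:ℝ)..c, Real.log t = -(Phi (-c)) := by
      rw [← h3, intervalIntegral.integral_symm]
    rw [h4]
    simp [Phi, Real.log_neg_eq_log]
    ring

lemma myIntegralLogAB (a b : ℝ) : ∫ t in a..b, Real.log t = Phi b - Phi a := by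
  rw [← myIntegralLog a, ← myIntegralLog b]
  rw [← intervalIntegral.integral_interval_sub_left (myIntegrableLog 0 b) (myIntegrableLog 0 a)]




lemma Psi_continuous : Continuous Psi := by
  have h : Psi = fun t => t / 2 * (t * Real.log t) - 3 / 4 * t ^ 2 := by
    funext t; simp only [Psi]; ring
  rw [h]
  exact ((continuous_id.div_const 2).mul Real.continuous_mul_log).sub
    (continuous_const.mul (continuous_pow 2))

lemma Psi_even (t : ℝ) : Psi (-t) = Psi t := by
  simp [Psi, Real.log_neg_eq_log]

lemma hasDerivAt_Psi {x : ℝ} (hx : x ≠ 0) : HasDerivAt Psi (Phi x) x := by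
  have h1 : HasDerivAt (fun t : ℝ => t ^ 2 / 2 * Real.log t)
      (x * Real.log x + x / 2) x := by
    have := ((hasDerivAt_pow 2 x).div_const 2).mul (Real.hasDerivAt_log hx)
    refine this.congr_deriv ?_
    field_simp
    ring
  have h2 : HasDerivAt (fun t : ℝ => 3 / 4 * t ^ 2) (3 / 2 * x) x := by
    have := (hasDerivAt_pow 2 x).const_mul (3/4 : ℝ)
    refine this.congr_deriv ?_
    ring
  have := h1.sub h2
  refine this.congr_deriv ?_
  simp [Phi]; ring

lemma myIntegralPhi0 {c : ℝ} (hc : 0 ≤ c) : ∫ t in (0:ℝ)..c, Phi t = Psi c := by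
  have h := intervalIntegral.integral_eq_sub_of_hasDeriv_right_of_le hc
    (f := Psi) (f' := Phi) Psi_continuous.continuousOn
    (fun x hx => (hasDerivAt_Psi (ne_of_gt hx.1)).hasDerivWithinAt)
    (Phi_continuous.intervalIntegrable 0 c)
  rw [h]
  simp [Psi]

lemma myIntegralPhi (c : ℝ) : ∫ t in (0:ℝ)..c, Phi t = Psi c := by
  rcases le_total 0 c with hc | hc
  · exact myIntegralPhi0 hc
  · have h1 : ∫ t in (0:ℝ)..(-c), Phi t = Psi (-c) := myIntegralPhi0 (by linarith)
    have h2 : ∫ t in (0:ℝ)..(-c), Phi t = ∫ t in (0:ℝ)..(-c), -Phi (-t) := by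
      apply intervalIntegral.integral_congr
      intro x _
      simp [Phi, Real.log_neg_eq_log]
      ring
    rw [h2, intervalIntegral.integral_neg, intervalIntegral.integral_comp_neg (fun t => Phi t)]
      at h1
    have h3 : ∫ t in (0:ℝ)..c, Phi t = Psi (-c) := by
      rw [intervalIntegral.integral_symm] at h1
      simpa using h1
    rw [h3, Psi_even]

lemma myIntegralPhiAB (a b : ℝ) : ∫ t in a..b, Phi t = Psi b - Psi a := by
  rw [← myIntegralPhi a, ← myIntegralPhi b,
    ← intervalIntegral.integral_interval_sub_left
      (Phi_continuous.intervalIntegrable 0 b) (Phi_continuous.intervalIntegrable 0 a)]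

lemma fder_eq_indicator {δ : ℝ} (hδ1 : δ < 1) (y : ℝ) :
    fder δ y = (Ico (0:ℝ) δ).indicator (fun _ => 1/δ) y
      + (Icc (1:ℝ) (1+δ)).indicator (fun _ => -(1/δ)) y := by
  unfold fder
  by_cases h1 : y ∈ Ico (0:ℝ) δ
  · have h2 : y ∉ Icc (1:ℝ) (1+δ) := by
      intro h2
      have := h1.2
      have := h2.1
      linarith
    simp [h1, h2]
  · by_cases h2 : y ∈ Icc (1:ℝ) (1+δ) <;> simp [h1, h2]

lemma integral_fder_mul {δ : ℝ} (hδ : 0 < δ) (hδ1 : δ < 1) (g : ℝ → ℝ)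
    (h1 : IntervalIntegrable g volume 0 δ) (h2 : IntervalIntegrable g volume 1 (1+δ)) :
    ∫ y, fder δ y * g y
      = (1/δ) * (∫ y in (0:ℝ)..δ, g y) - (1/δ) * ∫ y in (1:ℝ)..(1+δ), g y := by
  have h1' : IntegrableOn (fun y => (1/δ) * g y) (Ico (0:ℝ) δ) := by
    have : IntegrableOn g (Ioc (0:ℝ) δ) := by
      rw [intervalIntegrable_iff, uIoc_of_le hδ.le] at h1; exact h1
    exact ((this.congr_set_ae Ico_ae_eq_Ioc)).const_mul _
  have h2' : IntegrableOn (fun y => (-(1/δ)) * g y) (Icc (1:ℝ) (1+δ)) := by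
    have : IntegrableOn g (Ioc (1:ℝ) (1+δ)) := by
      rw [intervalIntegrable_iff, uIoc_of_le (by linarith)] at h2; exact h2
    exact ((this.congr_set_ae Ioc_ae_eq_Icc.symm)).const_mul _
  have key : ∀ y, fder δ y * g y
      = (Ico (0:ℝ) δ).indicator (fun y => (1/δ) * g y) y
        + (Icc (1:ℝ) (1+δ)).indicator (fun y => (-(1/δ)) * g y) y := by
    intro y
    rw [fder_eq_indicator hδ1, add_mul, Set.indicator_mul_left, Set.indicator_mul_left]
  rw [integral_congr_ae (Filter.EventuallyEq.of_eq (funext key))]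
  rw [integral_add ((integrable_indicator_iff measurableSet_Ico).2 h1')
      ((integrable_indicator_iff measurableSet_Icc).2 h2'),
    MeasureTheory.integral_indicator measurableSet_Ico,
    MeasureTheory.integral_indicator measurableSet_Icc,
    integral_Ico_eq_integral_Ioo, integral_Icc_eq_integral_Ioc,
    ← integral_Ioc_eq_integral_Ioo,
    ← intervalIntegral.integral_of_le hδ.le,
    ← intervalIntegral.integral_of_le (by linarith : (1:ℝ) ≤ 1 + δ),
    intervalIntegral.integral_const_mul, intervalIntegral.integral_const_mul]
  ring

lemma logSubIntegrable (x a b : ℝ) :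
    IntervalIntegrable (fun y => -Real.log (x - y)) volume a b := by
  have := (myIntegrableLog (x - a) (x - b)).comp_sub_left x
  simp only [sub_sub_cancel] at this
  exact this.neg

lemma intLogShift (x a b : ℝ) :
    ∫ y in a..b, -Real.log (x - y) = -(Phi (x - a) - Phi (x - b)) := by
  rw [intervalIntegral.integral_neg,
    intervalIntegral.integral_comp_sub_left (fun t => Real.log t) x, myIntegralLogAB]

lemma intPhiShift (s a b : ℝ) :
    ∫ x in a..b, Phi (x - s) = Psi (b - s) - Psi (a - s) := by
  rw [intervalIntegral.integral_comp_sub_right (fun t => Phi t) s, myIntegralPhiAB]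

lemma inner_eq {δ : ℝ} (hδ : 0 < δ) (hδ1 : δ < 1) (x : ℝ) :
    ∫ y, fder δ y * (-Real.log |x - y|)
      = (1/δ) * (Phi (x - δ) - Phi x + Phi (x - 1) - Phi (x - 1 - δ)) := by
  have habs : ∀ y : ℝ, -Real.log |x - y| = -Real.log (x - y) := fun y => by
    rw [Real.log_abs]
  rw [integral_congr_ae (Filter.EventuallyEq.of_eq
    (funext fun y => by rw [habs y]))]
  rw [integral_fder_mul hδ hδ1 _ (logSubIntegrable x 0 δ) (logSubIntegrable x 1 (1+δ)),
    intLogShift, intLogShift]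
  simp only [sub_zero]
  rw [show x - (1 + δ) = x - 1 - δ by ring]
  ring

lemma outer_int (δ : ℝ) (a b : ℝ) :
    ∫ x in a..b, (1/δ) * (Phi (x - δ) - Phi x + Phi (x - 1) - Phi (x - 1 - δ))
      = (1/δ) * ((Psi (b - δ) - Psi (a - δ)) - (Psi b - Psi a)
          + (Psi (b - 1) - Psi (a - 1)) - (Psi (b - 1 - δ) - Psi (a - 1 - δ))) := by
  have c1 : ∀ s : ℝ, IntervalIntegrable (fun x => Phi (x - s)) volume a b :=
    fun s => (Phi_continuous.comp (continuous_id.sub continuous_const)).intervalIntegrable a b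
  have c0 : IntervalIntegrable (fun x => Phi x) volume a b :=
    Phi_continuous.intervalIntegrable a b
  rw [intervalIntegral.integral_const_mul]
  congr 1
  rw [intervalIntegral.integral_sub (((c1 δ).sub c0).add (c1 1)) (by
      simpa [sub_sub] using c1 (1+δ)),
    intervalIntegral.integral_add ((c1 δ).sub c0) (c1 1),
    intervalIntegral.integral_sub (c1 δ) c0]
  have e0 : ∫ x in a..b, Phi x = Psi b - Psi a := myIntegralPhiAB a b
  have e1 := intPhiShift δ a b
  have e2 := intPhiShift 1 a b
  have e3 := intPhiShift (1+δ) a b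
  rw [e0, e1, e2, show (fun x => Phi (x - 1 - δ)) = fun x => Phi (x - (1+δ)) by
      funext x; rw [sub_sub], e3]
  ring_nf


set_option maxHeartbeats 2000000 in
/-- `⟨j(f_δ), j(f_δ)⟩` diverges logarithmically as `δ → 0`:
`⟨j(f_δ), j(f_δ)⟩ = (1/2π²)(−log δ) + O(1)`. -/
theorem stmt11 :
    ∃ C : ℝ, ∀ δ ∈ Set.Ioo (0 : ℝ) (1 / 2),
      |currentNorm δ - (1 / (2 * π ^ 2)) * (-Real.log δ)| ≤ C := by
  use 1
  rintro δ ⟨hδ, hδ2⟩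
  have hδ1 : δ < 1 := by linarith
  -- rewrite the double integral
  set Cf : ℝ → ℝ := fun x => (1/δ) * (Phi (x - δ) - Phi x + Phi (x - 1) - Phi (x - 1 - δ))
    with hCf
  have hCfcont : Continuous Cf := by
    apply continuous_const.mul
    exact (((Phi_continuous.comp (continuous_id.sub continuous_const)).sub
      Phi_continuous).add (Phi_continuous.comp (continuous_id.sub continuous_const))).sub
      (Phi_continuous.comp ((continuous_id.sub continuous_const).sub continuous_const))
  have hinner : ∀ x : ℝ, (∫ y : ℝ, fder δ x * fder δ y * (-Real.log |x - y|))
      = fder δ x * Cf x := by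
    intro x
    rw [integral_congr_ae (Filter.EventuallyEq.of_eq (funext fun y =>
      mul_assoc (fder δ x) (fder δ y) (-Real.log |x - y|))),
      MeasureTheory.integral_const_mul, inner_eq hδ hδ1 x]
  have hCN : currentNorm δ = (1 / (4 * π ^ 2)) * ∫ x : ℝ, fder δ x * Cf x := by
    unfold currentNorm
    congr 1
    exact integral_congr_ae (Filter.EventuallyEq.of_eq (funext hinner))
  rw [integral_fder_mul hδ hδ1 Cf (hCfcont.intervalIntegrable _ _)
      (hCfcont.intervalIntegrable _ _)] at hCN
  rw [hCf] at hCN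
  rw [outer_int, outer_int] at hCN
  -- normalize the Psi arguments
  have l2 : Real.log (0 - δ) = Real.log δ := by
    rw [show (0:ℝ) - δ = -δ by ring, Real.log_neg_eq_log]
  have l3 : Real.log (δ - 1) = Real.log (1 - δ) := by
    rw [show δ - 1 = -(1 - δ) by ring, Real.log_neg_eq_log]
  have l4 : Real.log ((0:ℝ) - 1) = 0 := by
    rw [show (0:ℝ) - 1 = -(1:ℝ) by ring, Real.log_neg_eq_log, Real.log_one]
  have l5 : Real.log (δ - 1 - δ) = 0 := by
    rw [show δ - 1 - δ = -(1:ℝ) by ring, Real.log_neg_eq_log, Real.log_one]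
  have l6 : Real.log (0 - 1 - δ) = Real.log (1 + δ) := by
    rw [show (0:ℝ) - 1 - δ = -(1 + δ) by ring, Real.log_neg_eq_log]
  have l7 : Real.log (1 + δ - δ) = 0 := by
    rw [show 1 + δ - δ = (1:ℝ) by ring, Real.log_one]
  have l8 : Real.log (1 + δ - 1) = Real.log δ := by rw [show 1 + δ - 1 = δ by ring]
  have l10 : Real.log (1 + δ - 1 - δ) = 0 := by
    rw [show 1 + δ - 1 - δ = (0:ℝ) by ring, Real.log_zero]
  have l11 : Real.log (1 - 1 - δ) = Real.log δ := by
    rw [show (1:ℝ) - 1 - δ = -δ by ring, Real.log_neg_eq_log]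
  have l1 : Real.log (δ - δ) = 0 := by
    rw [show δ - δ = (0:ℝ) by ring, Real.log_zero]
  have l9 : Real.log ((1:ℝ) - 1) = 0 := by
    rw [show (1:ℝ) - 1 = (0:ℝ) by ring, Real.log_zero]
  simp only [Psi, l1, l2, l3, l4, l5, l6, l7, l8, l9, l10, l11, Real.log_one,
    Real.log_zero] at hCN
  -- closed form for the difference
  have hπ : (3:ℝ) < π := Real.pi_gt_three
  have hπ0 : π ≠ 0 := by positivity
  have hδ0 : δ ≠ 0 := ne_of_gt hδ
  have hgoal : currentNorm δ - 1 / (2 * π ^ 2) * (-Real.log δ)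
      = (1 / (4 * π ^ 2)) *
        (((1 + δ) ^ 2 * Real.log (1 + δ) + (1 - δ) ^ 2 * Real.log (1 - δ)) / δ ^ 2) := by
    rw [hCN]
    field_simp
    ring
  rw [hgoal]
  clear_value Cf
  clear hgoal hCN hinner hCfcont hCf Cf l1 l2 l3 l4 l5 l6 l7 l8 l9 l10 l11
  -- bound the remainder
  set A := Real.log (1 + δ) with hA
  set B := Real.log (1 - δ) with hB
  have h1δ : (0:ℝ) < 1 + δ := by linarith
  have h1δ' : (0:ℝ) < 1 - δ := by linarith
  have hA1 : 0 ≤ A := Real.log_nonneg (by linarith)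
  have hA2 : A ≤ δ := by
    have := Real.log_le_sub_one_of_pos h1δ
    linarith
  have hB1 : B ≤ 0 := Real.log_nonpos (by linarith) (by linarith)
  have hB2 : -B ≤ 2 * δ := by
    have h := Real.log_le_sub_one_of_pos (show (0:ℝ) < (1 - δ)⁻¹ by positivity)
    rw [Real.log_inv, ← hB] at h
    have h2 : (1 - δ)⁻¹ - 1 = δ / (1 - δ) := by field_simp; ring
    have h3 : δ / (1 - δ) ≤ 2 * δ := by
      rw [div_le_iff₀ h1δ']
      nlinarith
    linarith
  have hAB : A + B = Real.log (1 - δ ^ 2) := by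
    rw [hA, hB, ← Real.log_mul (by linarith) (by linarith)]
    ring_nf
  have hS1 : A + B ≤ 0 := by
    rw [hAB]
    exact Real.log_nonpos (by nlinarith) (by nlinarith)
  have hS2 : -(A + B) ≤ 2 * δ ^ 2 := by
    have hpos : (0:ℝ) < 1 - δ ^ 2 := by nlinarith
    have h := Real.log_le_sub_one_of_pos (show (0:ℝ) < (1 - δ ^ 2)⁻¹ by positivity)
    rw [Real.log_inv, ← hAB] at h
    have h2 : (1 - δ ^ 2)⁻¹ - 1 = δ ^ 2 / (1 - δ ^ 2) := by field_simp; ring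
    have h3 : δ ^ 2 / (1 - δ ^ 2) ≤ 2 * δ ^ 2 := by
      rw [div_le_iff₀ hpos]
      nlinarith [mul_nonneg (mul_nonneg hδ.le hδ.le) (by nlinarith : (0:ℝ) ≤ 1 - 2 * δ ^ 2)]
    linarith
  have hh : |(1 + δ) ^ 2 * A + (1 - δ) ^ 2 * B| ≤ 8 * δ ^ 2 := by
    rw [abs_le]
    constructor
    · nlinarith [mul_nonneg hδ.le (sub_nonneg.2 hA2), mul_nonneg hδ.le hA1,
        mul_nonneg (mul_nonneg hδ.le hδ.le) (neg_nonneg.2 hS1),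
        mul_nonneg hδ.le (by linarith : 0 ≤ 2 * δ + B)]
    · nlinarith [mul_nonneg hδ.le (sub_nonneg.2 hA2), mul_nonneg hδ.le hA1,
        mul_nonneg (mul_nonneg hδ.le hδ.le) (neg_nonneg.2 hS1),
        mul_nonneg hδ.le (by linarith : 0 ≤ 2 * δ + B),
        mul_nonneg hδ.le (neg_nonneg.2 hB1)]
  have hπ2 : (0:ℝ) < 1 / (4 * π ^ 2) := by positivity
  rw [abs_mul, abs_of_pos hπ2, abs_div, abs_of_nonneg (sq_nonneg δ)]
  have hfin : |(1 + δ) ^ 2 * A + (1 - δ) ^ 2 * B| / δ ^ 2 ≤ 8 := by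
    rw [div_le_iff₀ (by positivity)]
    linarith
  calc 1 / (4 * π ^ 2) * (|(1 + δ) ^ 2 * A + (1 - δ) ^ 2 * B| / δ ^ 2)
      ≤ 1 / (4 * π ^ 2) * 8 := by
        apply mul_le_mul_of_nonneg_left hfin hπ2.le
    _ ≤ 1 := by
        rw [div_mul_eq_mul_div, mul_comm]
        rw [div_le_one (by positivity)]
        nlinarith
end
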